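/- Let H = (V,H) be a boolean representable simplicial complex of dimension ≥ 2 (i.e. containing a 3-element face). Then the geodesic distance between any two vertices in the graph of H (vertex set V, edges the 2-element faces) is at most 2. -/

import Mathlib

open scoped Classical

variable {V : Type}

def IsSC (faces : Set (Finset V)) : Prop :=
  (∀ v : V, ({v} : Finset V) ∈ faces) ∧
    ∀ ⦃X Y : Finset V⦄, X ∈ faces → Y ⊆ X → Y ∈ faces

def IsFlat (faces : Set (Finset V)) (F : Set V) : Prop :=
  ∀ I ∈ faces, (I : Set V) ⊆ F → ∀ p ∉ F, insert p I ∈ faces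

def cl (faces : Set (Finset V)) (X : Set V) : Set V :=
  ⋂₀ {F : Set V | IsFlat faces F ∧ X ⊆ F}

def BRep (faces : Set (Finset V)) : Prop :=
  ∀ X ∈ faces, ∃ (k : ℕ) (F : Fin (k + 1) → Set V) (x : Fin k → V),
    (∀ i, IsFlat faces (F i)) ∧ StrictMono F ∧ Function.Injective x ∧
    (∀ i : Fin k, x i ∈ F i.succ \ F i.castSucc) ∧
    X = Finset.image x Finset.univ

def skel (faces : Set (Finset V)) : SimpleGraph V where
  Adj p q := p ≠ q ∧ ({p, q} : Finset V) ∈ faces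
  symm := by
    constructor; rintro p q ⟨h1, h2⟩
    exact ⟨h1.symm, by rwa [Finset.pair_comm]⟩
  loopless := by constructor; rintro p ⟨h, _⟩; exact h rfl

def flatGraph (faces : Set (Finset V)) : SimpleGraph V where
  Adj p q := p ≠ q ∧ cl faces {p, q} ≠ Set.univ
  symm := by
    constructor; rintro p q ⟨h1, h2⟩
    exact ⟨h1.symm, by rwa [Set.pair_comm]⟩
  loopless := by constructor; rintro p ⟨h, _⟩; exact h rfl
theorem brep_dist_le_two [Fintype V] [Nonempty V]
    {faces : Set (Finset V)} (hsc : IsSC faces) (hbr : BRep faces)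
    (hdim : ∃ X ∈ faces, X.card = 3) (u v : V) :
    u = v ∨ (skel faces).Adj u v ∨
      ∃ w : V, (skel faces).Adj u w ∧ (skel faces).Adj w v := by
  by_cases huv : u = v
  · exact Or.inl huv
  obtain ⟨X, hX, hcard⟩ := hdim
  obtain ⟨k, F, x, hflat, hmono, hinj, hx, hXeq⟩ := hbr X hX
  have hk : k = 3 := by
    subst hXeq
    rw [Finset.card_image_of_injective _ hinj, Finset.card_univ, Fintype.card_fin] at hcard
    omega
  subst hk
  have hflat1 : IsFlat faces (F 1) := hflat 1
  have hx0 : x 0 ∈ F 1 := (hx 0).1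
  have hx1 : x 1 ∉ F 1 := (hx 1).2
  have edge : ∀ p q : V, p ∈ F 1 → q ∉ F 1 → (skel faces).Adj p q := by
    intro p q hp hq
    refine ⟨fun h => hq (h ▸ hp), ?_⟩
    have h2 := hflat1 {p} (hsc.1 p) (by simpa using hp) q hq
    rw [Finset.pair_comm]
    exact h2
  by_cases hu : u ∈ F 1 <;> by_cases hv : v ∈ F 1
  · exact Or.inr (Or.inr ⟨x 1, edge u (x 1) hu hx1, (edge v (x 1) hv hx1).symm⟩)
  · exact Or.inr (Or.inl (edge u v hu hv))
  · exact Or.inr (Or.inl ((edge v u hv hu).symm))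
  · exact Or.inr (Or.inr ⟨x 0, (edge (x 0) u hx0 hu).symm, edge (x 0) v hx0 hv⟩)
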